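/- Let κ, λ ∈ ℝ and C(r) = κ + λ·( log|1 − (r+1)^{1/3}| − (1/2)·log((r+1)^{2/3} + (r+1)^{1/3} + 1) − √3·arctan((2·(r+1)^{1/3} + 1)/√3) ). Then for every r > 0, 3·r·(r+1)·C″(r) + (5r+3)·C′(r) = 0. -/

import Mathlib

open Real

set_option maxHeartbeats 1000000

private lemma aux_hasDerivAt (κ lam : ℝ) (r : ℝ) (hr : 0 < r) :
    HasDerivAt (fun s : ℝ => κ + lam *
      (Real.log (1 - (s + 1) ^ ((1 : ℝ) / 3))
        - (1 / 2) * Real.log ((s + 1) ^ ((2 : ℝ) / 3) + (s + 1) ^ ((1 : ℝ) / 3) + 1)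
        - Real.sqrt 3 * Real.arctan ((2 * (s + 1) ^ ((1 : ℝ) / 3) + 1) / Real.sqrt 3)))
      (lam * ((r + 1) ^ ((1 : ℝ) / 3) / (r * (r + 1)))) r := by
  have hr1 : (0:ℝ) < r + 1 := by linarith
  have hne : r + 1 ≠ 0 := ne_of_gt hr1
  have hupos : 0 < (r + 1) ^ ((1:ℝ)/3) := Real.rpow_pos_of_pos hr1 _
  have hu1 : 1 < (r + 1) ^ ((1:ℝ)/3) :=
    (Real.one_lt_rpow_iff_of_pos hr1).2 (Or.inl ⟨by linarith, by norm_num⟩)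
  have hu3 : ((r + 1) ^ ((1:ℝ)/3)) ^ 3 = r + 1 := by
    rw [← Real.rpow_natCast ((r+1) ^ ((1:ℝ)/3)) 3, ← Real.rpow_mul (le_of_lt hr1)]
    norm_num
  have hvu : (r + 1) ^ ((2:ℝ)/3) = ((r + 1) ^ ((1:ℝ)/3)) ^ 2 := by
    rw [← Real.rpow_natCast ((r+1) ^ ((1:ℝ)/3)) 2, ← Real.rpow_mul (le_of_lt hr1)]
    norm_num
  have ha : (r + 1) ^ ((1:ℝ)/3 - 1) = (r + 1) ^ ((1:ℝ)/3) / (r + 1) := by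
    rw [Real.rpow_sub hr1, Real.rpow_one]
  have hb : (r + 1) ^ ((2:ℝ)/3 - 1) = ((r + 1) ^ ((1:ℝ)/3)) ^ 2 / (r + 1) := by
    rw [Real.rpow_sub hr1, Real.rpow_one, hvu]
  have hs3 : (0:ℝ) < Real.sqrt 3 := Real.sqrt_pos.2 (by norm_num)
  have hs3' : Real.sqrt 3 ≠ 0 := ne_of_gt hs3
  have hid : HasDerivAt (fun s : ℝ => s + 1) 1 r := (hasDerivAt_id r).add_const 1
  have hdu : HasDerivAt (fun s : ℝ => (s + 1) ^ ((1:ℝ)/3))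
      (1 * ((1:ℝ)/3) * (r + 1) ^ ((1:ℝ)/3 - 1)) r :=
    hid.rpow_const (Or.inl hne)
  have hdv : HasDerivAt (fun s : ℝ => (s + 1) ^ ((2:ℝ)/3))
      (1 * ((2:ℝ)/3) * (r + 1) ^ ((2:ℝ)/3 - 1)) r :=
    hid.rpow_const (Or.inl hne)
  have h1ne : 1 - (r + 1) ^ ((1:ℝ)/3) ≠ 0 := by intro h; nlinarith
  have hqpos : (0:ℝ) < (r + 1) ^ ((2:ℝ)/3) + (r + 1) ^ ((1:ℝ)/3) + 1 := by positivity
  have H := ((((((hasDerivAt_const r (1:ℝ)).sub hdu).log h1ne).sub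
      ((((hdv.add hdu).add_const 1).log (ne_of_gt hqpos)).const_mul ((1:ℝ)/2))).sub
      (((((hdu.const_mul 2).add_const 1).div_const (Real.sqrt 3)).arctan).const_mul
        (Real.sqrt 3))).const_mul lam).const_add κ
  refine H.congr_deriv ?_
  symm
  simp only [Pi.sub_apply, Pi.add_apply]
  rw [ha, hb, hvu]
  have hw : 1 + ((2 * (r + 1) ^ ((1:ℝ)/3) + 1) / Real.sqrt 3) ^ 2 =
      (4 * ((r + 1) ^ ((1:ℝ)/3)) ^ 2 + 4 * (r + 1) ^ ((1:ℝ)/3) + 4) / 3 := by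
    rw [div_pow, Real.sq_sqrt (by norm_num : (0:ℝ) ≤ 3)]
    ring
  rw [hw]
  set u : ℝ := (r + 1) ^ ((1:ℝ)/3) with hu
  have hune : u ≠ 0 := ne_of_gt hupos
  have hu1ne : u - 1 ≠ 0 := by intro h; nlinarith
  have hq2 : u ^ 2 + u + 1 ≠ 0 := by positivity
  have hq4 : 4 * u ^ 2 + 4 * u + 4 ≠ 0 := by positivity
  rw [show r = u ^ 3 - 1 from by linarith]
  have h1ne' : 1 - u ≠ 0 := by intro h; apply hu1ne; linarith
  have hd1 : (u ^ 3 - 1) * (u ^ 3 - 1 + 1) ≠ 0 := by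
    have : u ^ 3 - 1 ≠ 0 := by
      intro h; apply hu1ne; nlinarith [sq_nonneg u, sq_nonneg (u+1)]
    have h2 : u ^ 3 - 1 + 1 ≠ 0 := by
      intro h; apply hune; nlinarith
    exact mul_ne_zero this h2
  have hd2 : (-u ^ 3 + u ^ 6 : ℝ) ≠ 0 := by
    intro h
    have h3 : u ^ 3 * (u ^ 3 - 1) = 0 := by ring_nf; linarith [h]
    rcases mul_eq_zero.1 h3 with h4 | h4
    · exact hune (pow_eq_zero_iff (by norm_num) |>.1 h4)
    · apply hu1ne; nlinarith [sq_nonneg u, sq_nonneg (u+1)]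
  have hu3' : u ^ 3 - 1 + 1 ≠ 0 := by intro h; apply hune; nlinarith
  have hu31 : u ^ 3 - 1 ≠ 0 := left_ne_zero_of_mul hd1
  field_simp
  ring

/-- Let `κ, λ ∈ ℝ` and
`C r = κ + λ·(log|1 − (r+1)^{1/3}| − (1/2)·log((r+1)^{2/3} + (r+1)^{1/3} + 1)
        − √3·arctan((2(r+1)^{1/3} + 1)/√3))`.
Then for every `r > 0`, `3·r·(r+1)·C″(r) + (5r+3)·C′(r) = 0`
(the radial reduction of the Laplace–Beltrami equation on `O_{P²}(-3)`). -/
theorem stmt_6 (κ lam : ℝ) (C : ℝ → ℝ)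
    (hC : ∀ r : ℝ, C r = κ + lam *
      (Real.log (1 - (r + 1) ^ ((1 : ℝ) / 3))
        - (1 / 2) * Real.log ((r + 1) ^ ((2 : ℝ) / 3) + (r + 1) ^ ((1 : ℝ) / 3) + 1)
        - Real.sqrt 3 * Real.arctan ((2 * (r + 1) ^ ((1 : ℝ) / 3) + 1) / Real.sqrt 3))) :
    ∀ r : ℝ, 0 < r →
      3 * r * (r + 1) * deriv (deriv C) r + (5 * r + 3) * deriv C r = 0 := by
  have hCfun : C = fun s : ℝ => κ + lam *
      (Real.log (1 - (s + 1) ^ ((1 : ℝ) / 3))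
        - (1 / 2) * Real.log ((s + 1) ^ ((2 : ℝ) / 3) + (s + 1) ^ ((1 : ℝ) / 3) + 1)
        - Real.sqrt 3 * Real.arctan ((2 * (s + 1) ^ ((1 : ℝ) / 3) + 1) / Real.sqrt 3)) :=
    funext hC
  set g : ℝ → ℝ := fun s => lam * ((s + 1) ^ ((1 : ℝ) / 3) / (s * (s + 1))) with hg
  have hderivC : ∀ s : ℝ, 0 < s → deriv C s = g s := by
    intro s hs
    have h := aux_hasDerivAt κ lam s hs
    rw [← hCfun] at h
    exact h.deriv
  intro r hr
  have hr1 : (0:ℝ) < r + 1 := by linarith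
  have hEq : deriv C =ᶠ[nhds r] g :=
    Filter.eventually_of_mem (Ioi_mem_nhds hr) (fun s hs => hderivC s hs)
  have h2 : deriv (deriv C) r = deriv g r := hEq.deriv_eq
  have hid : HasDerivAt (fun s : ℝ => s + 1) 1 r := (hasDerivAt_id r).add_const 1
  have hdu : HasDerivAt (fun s : ℝ => (s + 1) ^ ((1:ℝ)/3))
      (1 * ((1:ℝ)/3) * (r + 1) ^ ((1:ℝ)/3 - 1)) r :=
    hid.rpow_const (Or.inl (ne_of_gt hr1))
  have hdden : HasDerivAt (fun s : ℝ => s * (s + 1)) (1 * (r + 1) + r * 1) r :=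
    (hasDerivAt_id r).mul hid
  have hdenne : r * (r + 1) ≠ 0 := by positivity
  have hdg : HasDerivAt g (lam *
      ((1 * ((1:ℝ)/3) * (r + 1) ^ ((1:ℝ)/3 - 1) * (r * (r + 1)) -
        (r + 1) ^ ((1:ℝ)/3) * (1 * (r + 1) + r * 1)) / (r * (r + 1)) ^ 2)) r :=
    ((hdu.div hdden hdenne).const_mul lam)
  rw [h2, hdg.deriv, hderivC r hr, hg]
  have ha : (r + 1) ^ ((1:ℝ)/3 - 1) = (r + 1) ^ ((1:ℝ)/3) / (r + 1) := by
    rw [Real.rpow_sub hr1, Real.rpow_one]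
  rw [ha]
  have hrne : r ≠ 0 := ne_of_gt hr
  have hr1ne : r + 1 ≠ 0 := ne_of_gt hr1
  field_simp
  ring
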